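/- (Kernel density estimator variance bound.) Let f be a probability density on ℝ^d, K : ℝ^d → ℝ a measurable function with ∫ K(t)² dt < ∞, h > 0, n ∈ ℕ, and X_1, …, X_n i.i.d. with density f. Define the kernel density estimator f̂(t) := (1/(n h^d)) Σ_{i=1}^n K((t − X_i)/h). Then E ∫ ( f̂(t) − E f̂(t) )² dt ≤ ‖K‖₂² / (n h^d), where ‖K‖₂² = ∫ K(t)² dt. -/

import Mathlib

open MeasureTheory ProbabilityTheory
open scoped ENNReal

private lemma ofReal_int_le_lint {α : Type*} [MeasurableSpace α] (μ : Measure α)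
    (g : α → ℝ) (hg : ∀ x, 0 ≤ g x) :
    ENNReal.ofReal (∫ x, g x ∂μ) ≤ ∫⁻ x, ENNReal.ofReal (g x) ∂μ := by
  by_cases hgi : Integrable g μ
  · rw [ofReal_integral_eq_lintegral_ofReal hgi (ae_of_all _ hg)]
  · rw [integral_undef hgi]; simp

/-- Variance bound for the kernel density estimator:
`E ∫ (f̂(t) − E f̂(t))² dt ≤ ‖K‖₂² / (n h^d)`. -/
theorem kde_variance_bound (d : ℕ) {Ω : Type*} [MeasurableSpace Ω] (P : Measure Ω)
    [IsProbabilityMeasure P]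
    (f K : (Fin d → ℝ) → ℝ) (hf0 : ∀ t, 0 ≤ f t) (hfm : Measurable f)
    (hf1 : (∫ t, f t) = 1)
    (hKm : Measurable K) (hK2 : Integrable (fun t => K t ^ 2))
    (h : ℝ) (hh : 0 < h) (n : ℕ) (hn : 0 < n)
    (X : Fin n → Ω → (Fin d → ℝ)) (hXm : ∀ i, Measurable (X i))
    (hindep : iIndepFun X P)
    (hdist : ∀ i, Measure.map (X i) P = volume.withDensity (fun t => ENNReal.ofReal (f t))) :
    (∫ ω, (∫ t, ((1 / (n * h ^ d)) * ∑ i, K (h⁻¹ • (t - X i ω)) -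
          ∫ ω', (1 / (n * h ^ d)) * ∑ i, K (h⁻¹ • (t - X i ω')) ∂P) ^ 2) ∂P)
      ≤ (∫ t, K t ^ 2) / (n * h ^ d) := by
  classical
  have hnhd : (0:ℝ) < (n : ℝ) * h ^ d := by positivity
  set c : ℝ := 1 / ((n : ℝ) * h ^ d) with hc_def
  have hc : 0 < c := by positivity
  set μ : Measure (Fin d → ℝ) := volume.withDensity (fun t => ENNReal.ofReal (f t)) with hμ
  -- integrability of f and unit mass
  have hfint : Integrable f := by
    by_contra hcon
    rw [integral_undef hcon] at hf1; norm_num at hf1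
  have hfl : (∫⁻ x, ENNReal.ofReal (f x)) = 1 := by
    rw [← ofReal_integral_eq_lintegral_ofReal hfint (ae_of_all _ hf0), hf1, ENNReal.ofReal_one]
  set L : ℝ≥0∞ := ∫⁻ u, ENNReal.ofReal (K u ^ 2) with hL_def
  have hLofReal : L = ENNReal.ofReal (∫ u, K u ^ 2) := by
    rw [ofReal_integral_eq_lintegral_ofReal hK2 (ae_of_all _ fun u => sq_nonneg _)]
  -- measurability facts
  have hKsq_meas : Measurable fun u : Fin d → ℝ => ENNReal.ofReal (K u ^ 2) :=
    ENNReal.measurable_ofReal.comp (hKm.pow_const 2)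
  have hYm : ∀ i : Fin n, Measurable fun p : (Fin d → ℝ) × Ω => K (h⁻¹ • (p.1 - X i p.2)) :=
    fun i => hKm.comp ((measurable_fst.sub ((hXm i).comp measurable_snd)).const_smul h⁻¹)
  have hGm : Measurable fun p : (Fin d → ℝ) × Ω => c * ∑ i, K (h⁻¹ • (p.1 - X i p.2)) :=
    (Finset.measurable_sum Finset.univ fun i _ => hYm i).const_mul c
  set m : (Fin d → ℝ) → ℝ := fun t => ∫ ω', c * ∑ i, K (h⁻¹ • (t - X i ω')) ∂P with hm_def
  have hmM : StronglyMeasurable m := hGm.stronglyMeasurable.integral_prod_right'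
  have hgm : Measurable fun p : (Fin d → ℝ) × Ω =>
      ENNReal.ofReal ((c * ∑ i, K (h⁻¹ • (p.1 - X i p.2)) - m p.1) ^ 2) :=
    ENNReal.measurable_ofReal.comp
      ((hGm.sub (hmM.measurable.comp measurable_fst)).pow_const 2)
  -- the second moment function
  set W : (Fin d → ℝ) → ℝ≥0∞ := fun t => ∫⁻ x, ENNReal.ofReal (K (h⁻¹ • (t - x)) ^ 2) ∂μ
    with hW_def
  have hWmi : ∀ (t : Fin d → ℝ), Measurable fun x : Fin d → ℝ =>
      ENNReal.ofReal (K (h⁻¹ • (t - x)) ^ 2) := fun t =>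
    hKsq_meas.comp ((measurable_const.sub measurable_id).const_smul h⁻¹)
  have hWi : ∀ (t : Fin d → ℝ) (i : Fin n),
      (∫⁻ ω, ENNReal.ofReal (K (h⁻¹ • (t - X i ω)) ^ 2) ∂P) = W t := by
    intro t i
    rw [← lintegral_map (hWmi t) (hXm i), hdist i]
  -- pointwise-in-t bound
  have key : ∀ t : Fin d → ℝ,
      (∫⁻ ω, ENNReal.ofReal ((c * ∑ i, K (h⁻¹ • (t - X i ω)) - m t) ^ 2) ∂P)
        ≤ ENNReal.ofReal (c ^ 2) * ((n : ℝ≥0∞) * W t) := by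
    intro t
    by_cases hWt : W t = ⊤
    · rw [hWt, ENNReal.mul_top (by exact_mod_cast Nat.cast_ne_zero.mpr hn.ne'),
        ENNReal.mul_top (ENNReal.ofReal_pos.2 (pow_pos hc 2)).ne']
      exact le_top
    · set Y : Fin n → Ω → ℝ := fun i ω => K (h⁻¹ • (t - X i ω)) with hY_def
      have hYmeas : ∀ i, Measurable (Y i) := fun i =>
        hKm.comp ((measurable_const.sub (hXm i)).const_smul h⁻¹)
      have hYsq_int : ∀ i, Integrable (fun ω => Y i ω ^ 2) P := by
        intro i
        refine ⟨((hYmeas i).pow_const 2).aestronglyMeasurable, ?_⟩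
        rw [HasFiniteIntegral]
        calc (∫⁻ ω, (‖Y i ω ^ 2‖ₑ : ℝ≥0∞) ∂P)
            = ∫⁻ ω, ENNReal.ofReal (Y i ω ^ 2) ∂P :=
              lintegral_congr fun ω => Real.enorm_eq_ofReal (sq_nonneg _)
          _ = W t := hWi t i
          _ < ⊤ := lt_top_iff_ne_top.2 hWt
      have hY2 : ∀ i, MemLp (Y i) 2 P := fun i =>
        (memLp_two_iff_integrable_sq (hYmeas i).aestronglyMeasurable).2 (hYsq_int i)
      have hS2 : MemLp (fun ω => ∑ i, Y i ω) 2 P :=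
        memLp_finsetSum Finset.univ fun i _ => hY2 i
      have hYindep : iIndepFun Y P :=
        hindep.comp (fun _ x => K (h⁻¹ • (t - x)))
          (fun _ => hKm.comp ((measurable_const.sub measurable_id).const_smul h⁻¹))
      have hvar : variance (∑ i, Y i) P = ∑ i, variance (Y i) P :=
        IndepFun.variance_sum (fun i _ => hY2 i)
          (fun i _ j _ hij => hYindep.indepFun hij)
      have hmt : m t = c * ∫ ω, (∑ i, Y i ω) ∂P := by
        simp only [hm_def]
        rw [integral_const_mul]
      have hsum_eq : (fun ω => ∑ i, Y i ω) = ∑ i, Y i := by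
        ext ω; simp
      have hvar_le : variance (fun ω => ∑ i, Y i ω) P ≤ (n : ℝ) * (W t).toReal := by
        rw [hsum_eq, hvar]
        have hbound : ∀ i : Fin n, variance (Y i) P ≤ (W t).toReal := by
          intro i
          have h3 : ENNReal.ofReal (∫ ω, Y i ω ^ 2 ∂P) = W t := by
            rw [ofReal_integral_eq_lintegral_ofReal (hYsq_int i)
              (ae_of_all _ fun ω => sq_nonneg _), hWi t i]
          calc variance (Y i) P ≤ ∫ ω, (Y i ^ 2) ω ∂P :=
                variance_le_expectation_sq (hYmeas i).aestronglyMeasurable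
            _ = ∫ ω, Y i ω ^ 2 ∂P := by simp
            _ = (W t).toReal := by
                rw [← h3, ENNReal.toReal_ofReal (integral_nonneg fun ω => sq_nonneg _)]
        calc (∑ i, variance (Y i) P) ≤ ∑ _i : Fin n, (W t).toReal :=
              Finset.sum_le_sum fun i _ => hbound i
          _ = (n : ℝ) * (W t).toReal := by simp [mul_comm]
      calc (∫⁻ ω, ENNReal.ofReal ((c * ∑ i, K (h⁻¹ • (t - X i ω)) - m t) ^ 2) ∂P)
          = ∫⁻ ω, ENNReal.ofReal (c ^ 2) *
              ENNReal.ofReal (((∑ i, Y i ω) - ∫ ω', (∑ i, Y i ω') ∂P) ^ 2) ∂P := by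
            refine lintegral_congr fun ω => ?_
            rw [← ENNReal.ofReal_mul (sq_nonneg c)]
            congr 1
            rw [hmt]
            ring
        _ = ENNReal.ofReal (c ^ 2) * evariance (fun ω => ∑ i, Y i ω) P := by
            rw [lintegral_const_mul' _ _ ENNReal.ofReal_ne_top,
              evariance_eq_lintegral_ofReal]
        _ = ENNReal.ofReal (c ^ 2) * ENNReal.ofReal (variance (fun ω => ∑ i, Y i ω) P) := by
            rw [hS2.ofReal_variance_eq]
        _ ≤ ENNReal.ofReal (c ^ 2) * ((n : ℝ≥0∞) * W t) := by
            refine mul_le_mul_right ?_ _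
            calc ENNReal.ofReal (variance (fun ω => ∑ i, Y i ω) P)
                ≤ ENNReal.ofReal ((n : ℝ) * (W t).toReal) := ENNReal.ofReal_le_ofReal hvar_le
              _ ≤ (n : ℝ≥0∞) * W t := by
                  rw [ENNReal.ofReal_mul (Nat.cast_nonneg n), ENNReal.ofReal_natCast]
                  exact mul_le_mul_right ENNReal.ofReal_toReal_le _
  -- compute ∫⁻ t, W t
  have hWint : (∫⁻ t, W t) = ENNReal.ofReal (h ^ d) * L := by
    have hprod : Measurable fun p : (Fin d → ℝ) × (Fin d → ℝ) =>
        ENNReal.ofReal (K (h⁻¹ • (p.1 - p.2)) ^ 2) * ENNReal.ofReal (f p.2) :=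
      (hKsq_meas.comp ((measurable_fst.sub measurable_snd).const_smul h⁻¹)).mul
        ((ENNReal.measurable_ofReal.comp hfm).comp measurable_snd)
    have hinner : ∀ x : Fin d → ℝ,
        (∫⁻ t, ENNReal.ofReal (K (h⁻¹ • (t - x)) ^ 2)) = ENNReal.ofReal (h ^ d) * L := by
      intro x
      have htrans : (∫⁻ t, ENNReal.ofReal (K (h⁻¹ • (t - x)) ^ 2))
          = ∫⁻ t, ENNReal.ofReal (K (h⁻¹ • t) ^ 2) :=
        lintegral_sub_right_eq_self (fun t => ENNReal.ofReal (K (h⁻¹ • t) ^ 2)) x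
      have hmap : Measure.map (fun t : Fin d → ℝ => h⁻¹ • t) volume
          = ENNReal.ofReal (h ^ d) • volume := by
        rw [Measure.map_addHaar_smul volume (inv_ne_zero hh.ne')]
        rw [Module.finrank_fin_fun]
        congr 1
        rw [abs_of_pos (by positivity : (0:ℝ) < (h⁻¹ ^ d)⁻¹), inv_pow, inv_inv]
      have hcs : (∫⁻ t, ENNReal.ofReal (K (h⁻¹ • t) ^ 2))
          = ∫⁻ u, ENNReal.ofReal (K u ^ 2) ∂(Measure.map (fun t : Fin d → ℝ => h⁻¹ • t) volume) :=
        (lintegral_map hKsq_meas (measurable_const_smul h⁻¹)).symm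
      rw [htrans, hcs, hmap, lintegral_smul_measure, smul_eq_mul]
    calc (∫⁻ t, W t)
        = ∫⁻ t, ∫⁻ x, ENNReal.ofReal (K (h⁻¹ • (t - x)) ^ 2) * ENNReal.ofReal (f x) ∂volume
            ∂volume := by
          refine lintegral_congr fun t => ?_
          simp only [hW_def, hμ]
          rw [lintegral_withDensity_eq_lintegral_mul _ hfm.ennreal_ofReal
            (hWmi t)]
          exact lintegral_congr fun x => by simp [mul_comm]
      _ = ∫⁻ x, ∫⁻ t, ENNReal.ofReal (K (h⁻¹ • (t - x)) ^ 2) * ENNReal.ofReal (f x) ∂volume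
            ∂volume := lintegral_lintegral_swap hprod.aemeasurable
      _ = ∫⁻ x, (ENNReal.ofReal (h ^ d) * L) * ENNReal.ofReal (f x) ∂volume := by
          refine lintegral_congr fun x => ?_
          rw [lintegral_mul_const' _ _ ENNReal.ofReal_ne_top, hinner x]
      _ = ENNReal.ofReal (h ^ d) * L := by
          rw [lintegral_const_mul' _ _ (ENNReal.mul_ne_top ENNReal.ofReal_ne_top (by rw [hLofReal]; exact ENNReal.ofReal_ne_top)), hfl, mul_one]
  -- final assembly
  have hRHS0 : 0 ≤ (∫ t, K t ^ 2) / ((n : ℝ) * h ^ d) :=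
    div_nonneg (integral_nonneg fun t => sq_nonneg _) hnhd.le
  rw [← ENNReal.ofReal_le_ofReal_iff hRHS0]
  calc ENNReal.ofReal (∫ ω, (∫ t, (c * ∑ i, K (h⁻¹ • (t - X i ω)) - m t) ^ 2) ∂P)
      ≤ ∫⁻ ω, ENNReal.ofReal (∫ t, (c * ∑ i, K (h⁻¹ • (t - X i ω)) - m t) ^ 2) ∂P :=
        ofReal_int_le_lint _ _ (fun ω => integral_nonneg fun t => sq_nonneg _)
    _ ≤ ∫⁻ ω, ∫⁻ t, ENNReal.ofReal ((c * ∑ i, K (h⁻¹ • (t - X i ω)) - m t) ^ 2) ∂volume ∂P :=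
        lintegral_mono fun ω => ofReal_int_le_lint _ _ (fun t => sq_nonneg _)
    _ = ∫⁻ t, ∫⁻ ω, ENNReal.ofReal ((c * ∑ i, K (h⁻¹ • (t - X i ω)) - m t) ^ 2) ∂P ∂volume :=
        lintegral_lintegral_swap ((hgm.comp measurable_swap).aemeasurable)
    _ ≤ ∫⁻ t, ENNReal.ofReal (c ^ 2) * ((n : ℝ≥0∞) * W t) ∂volume := lintegral_mono key
    _ = ENNReal.ofReal (c ^ 2) * ((n : ℝ≥0∞) * ∫⁻ t, W t) := by
        rw [lintegral_const_mul' _ _ ENNReal.ofReal_ne_top,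
          lintegral_const_mul' _ _ (ENNReal.natCast_ne_top n)]
    _ = ENNReal.ofReal ((∫ u, K u ^ 2) / ((n : ℝ) * h ^ d)) := by
        rw [hWint, hLofReal, ← ENNReal.ofReal_natCast n, ← ENNReal.ofReal_mul (by positivity),
          ← ENNReal.ofReal_mul (by positivity), ← ENNReal.ofReal_mul (by positivity)]
        congr 1
        rw [hc_def]
        field_simp
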